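/- If r : [0,∞) → (0,∞)^n solves r' = 2ε[α(t) − A(t)r] • r with ‖α(t)‖ ≤ α* and ⟨A(t)x, x⟩ ≥ A_* ‖x‖² for all x with nonnegative components (A_* > 0), then d/dt |r(t)| ≤ 2ε‖r(t)‖(α* − A_* ‖r(t)‖); in particular |r(t)| is strictly decreasing whenever ‖r(t)‖ > α*/A_*. -/

import Mathlib

open Real

theorem deriv_l1_norm_bound {n : ℕ} (ε αstar Astar : ℝ) (hε : 0 < ε) (hAstar : 0 < Astar)
    (α : ℝ → Fin n → ℝ) (A : ℝ → Matrix (Fin n) (Fin n) ℝ)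
    (r : ℝ → Fin n → ℝ)
    (hpos : ∀ t : ℝ, 0 ≤ t → ∀ i, 0 < r t i)
    (hsol : ∀ t : ℝ, 0 ≤ t → ∀ i,
      HasDerivAt (fun s => r s i) (2 * ε * (α t i - ((A t).mulVec (r t)) i) * r t i) t)
    (hα : ∀ t : ℝ, 0 ≤ t → Real.sqrt (∑ i, α t i ^ 2) ≤ αstar)
    (hA : ∀ t : ℝ, 0 ≤ t → ∀ x : Fin n → ℝ, (∀ i, 0 ≤ x i) →
      Astar * (∑ i, x i ^ 2) ≤ ∑ i, ((A t).mulVec x) i * x i) :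
    ∀ t : ℝ, 0 ≤ t → ∀ d : ℝ,
      HasDerivAt (fun s => ∑ i, r s i) d t →
      d ≤ 2 * ε * Real.sqrt (∑ i, r t i ^ 2) *
            (αstar - Astar * Real.sqrt (∑ i, r t i ^ 2)) := by
  intro t ht d hd
  have hsum : HasDerivAt (fun s => ∑ i, r s i)
      (∑ i, 2 * ε * (α t i - ((A t).mulVec (r t)) i) * r t i) t :=
    HasDerivAt.fun_sum fun i _ => hsol t ht i
  have hdeq : d = ∑ i, 2 * ε * (α t i - ((A t).mulVec (r t)) i) * r t i :=
    hd.unique hsum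
  set R := Real.sqrt (∑ i, r t i ^ 2) with hR
  have hRnn : 0 ≤ R := Real.sqrt_nonneg _
  have hRsq : R ^ 2 = ∑ i, r t i ^ 2 := by
    rw [hR, Real.sq_sqrt (Finset.sum_nonneg fun i _ => sq_nonneg _)]
  -- Cauchy-Schwarz
  have hCS : (∑ i, α t i * r t i) ≤ αstar * R := by
    have h1 : (∑ i, α t i * r t i) ≤ Real.sqrt (∑ i, α t i ^ 2) * R := by
      calc (∑ i, α t i * r t i)
          ≤ Real.sqrt (∑ i, α t i ^ 2) * Real.sqrt (∑ i, r t i ^ 2) := by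
            have := Finset.sum_mul_sq_le_sq_mul_sq Finset.univ (α t) (r t)
            have habs : (∑ i, α t i * r t i) ≤ |∑ i, α t i * r t i| := le_abs_self _
            have : |∑ i, α t i * r t i| ≤
                Real.sqrt ((∑ i, α t i ^ 2) * (∑ i, r t i ^ 2)) := by
              rw [← Real.sqrt_sq_eq_abs]
              exact Real.sqrt_le_sqrt (by
                simpa [pow_two] using
                  Finset.sum_mul_sq_le_sq_mul_sq Finset.univ (α t) (r t))
            calc (∑ i, α t i * r t i) ≤ |∑ i, α t i * r t i| := habs
              _ ≤ Real.sqrt ((∑ i, α t i ^ 2) * (∑ i, r t i ^ 2)) := this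
              _ = Real.sqrt (∑ i, α t i ^ 2) * Real.sqrt (∑ i, r t i ^ 2) :=
                  Real.sqrt_mul (Finset.sum_nonneg fun i _ => sq_nonneg _) _
        _ = Real.sqrt (∑ i, α t i ^ 2) * R := rfl
    exact h1.trans (mul_le_mul_of_nonneg_right (hα t ht) hRnn)
  have hcoer : Astar * R ^ 2 ≤ ∑ i, ((A t).mulVec (r t)) i * r t i := by
    rw [hRsq]
    exact hA t ht (r t) fun i => (hpos t ht i).le
  have key : (∑ i, (α t i - ((A t).mulVec (r t)) i) * r t i) ≤ R * (αstar - Astar * R) := by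
    have : (∑ i, (α t i - ((A t).mulVec (r t)) i) * r t i)
        = (∑ i, α t i * r t i) - ∑ i, ((A t).mulVec (r t)) i * r t i := by
      rw [← Finset.sum_sub_distrib]
      congr 1; ext i; ring
    rw [this]
    have := sub_le_sub hCS hcoer
    calc (∑ i, α t i * r t i) - ∑ i, ((A t).mulVec (r t)) i * r t i
        ≤ αstar * R - Astar * R ^ 2 := this
      _ = R * (αstar - Astar * R) := by ring
  rw [hdeq]
  have h2e : (0:ℝ) ≤ 2 * ε := by linarith
  calc (∑ i, 2 * ε * (α t i - ((A t).mulVec (r t)) i) * r t i)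
      = 2 * ε * ∑ i, (α t i - ((A t).mulVec (r t)) i) * r t i := by
        rw [Finset.mul_sum]; congr 1; ext i; ring
    _ ≤ 2 * ε * (R * (αstar - Astar * R)) := mul_le_mul_of_nonneg_left key h2e
    _ = 2 * ε * R * (αstar - Astar * R) := by ring
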